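/- Let M be an A-module algebra over a weak *-Hopf algebra A, let μ_▷ : A_L → M denote the map a ↦ a▷1_M, and set K_▷ := {a ∈ A : a▷m = 0 for all m ∈ M}. Then: (i) (A_L∩A_R)▷1_M is contained in the center of M; (ii) (A_L∩C(A))▷1_M = C(A)▷1_M, and this set is contained in the center of M^A (C(A) denotes the center of A); (iii) the kernel of μ_▷ equals A_L∩K_▷, i.e. for a ∈ A_L, a▷1_M = 0 implies a▷m = 0 for all m ∈ M. -/

import Mathlib

open scoped TensorProduct

noncomputable section

/-- The componentwise star operation on a tensor product of star algebras,
as an additive map (it is conjugate-linear, hence not a `LinearMap`). -/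
def tensorStar (A B : Type) [Ring A] [Algebra ℂ A] [StarRing A] [StarModule ℂ A]
    [Ring B] [Algebra ℂ B] [StarRing B] [StarModule ℂ B] :
    A ⊗[ℂ] B →+ A ⊗[ℂ] B :=
  TensorProduct.liftAddHom
    (AddMonoidHom.mk'
      (fun a => AddMonoidHom.mk' (fun b => star a ⊗ₜ[ℂ] star b)
        (fun x y => by
          show star a ⊗ₜ[ℂ] star (x + y) = star a ⊗ₜ[ℂ] star x + star a ⊗ₜ[ℂ] star y
          rw [star_add, TensorProduct.tmul_add]))
      (fun x y => by
        ext b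
        show star (x + y) ⊗ₜ[ℂ] star b = star x ⊗ₜ[ℂ] star b + star y ⊗ₜ[ℂ] star b
        rw [star_add, TensorProduct.add_tmul]))
    (fun r a b => by
      show star (r • a) ⊗ₜ[ℂ] star b = star a ⊗ₜ[ℂ] star (r • b)
      rw [star_smul, star_smul, TensorProduct.smul_tmul])

/-- A finite dimensional weak `*`-Hopf algebra over `ℂ` (axioms of [BNS]),
together with the derived properties of the antipode (which follow from the
axioms and are included as fields for convenience). -/
structure WeakHopfAlgebra (A : Type) [Ring A] [Algebra ℂ A] [StarRing A] [StarModule ℂ A] where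
  Δ : A →ₗ[ℂ] A ⊗[ℂ] A
  ε : A →ₗ[ℂ] ℂ
  S : A →ₗ[ℂ] A
  Sinv : A →ₗ[ℂ] A
  finite : FiniteDimensional ℂ A
  Δ_mul : ∀ x y : A, Δ (x * y) = Δ x * Δ y
  Δ_star : ∀ x : A, Δ (star x) = tensorStar A A (Δ x)
  coassoc : ∀ x : A,
    (TensorProduct.assoc ℂ A A A) ((TensorProduct.map Δ (LinearMap.id : A →ₗ[ℂ] A)) (Δ x))
      = (TensorProduct.map (LinearMap.id : A →ₗ[ℂ] A) Δ) (Δ x)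
  counit_left : ∀ x : A,
    (TensorProduct.lid ℂ A) ((TensorProduct.map ε (LinearMap.id : A →ₗ[ℂ] A)) (Δ x)) = x
  counit_right : ∀ x : A,
    (TensorProduct.rid ℂ A) ((TensorProduct.map (LinearMap.id : A →ₗ[ℂ] A) ε) (Δ x)) = x
  unit_weak :
    (Δ 1 ⊗ₜ[ℂ] (1 : A)) * ((TensorProduct.assoc ℂ A A A).symm ((1 : A) ⊗ₜ[ℂ] Δ 1))
      = (TensorProduct.map Δ (LinearMap.id : A →ₗ[ℂ] A)) (Δ 1)
  unit_weak' :
    ((TensorProduct.assoc ℂ A A A).symm ((1 : A) ⊗ₜ[ℂ] Δ 1)) * (Δ 1 ⊗ₜ[ℂ] (1 : A))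
      = (TensorProduct.map Δ (LinearMap.id : A →ₗ[ℂ] A)) (Δ 1)
  counit_weak : ∀ x y z : A,
    ε (x * y * z) = (TensorProduct.lid ℂ ℂ)
      ((TensorProduct.map (ε ∘ₗ LinearMap.mulLeft ℂ x) (ε ∘ₗ LinearMap.mulRight ℂ z)) (Δ y))
  counit_weak' : ∀ x y z : A,
    ε (x * y * z) = (TensorProduct.lid ℂ ℂ)
      ((TensorProduct.map (ε ∘ₗ LinearMap.mulRight ℂ z) (ε ∘ₗ LinearMap.mulLeft ℂ x)) (Δ y))
  antipode_left : ∀ x : A,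
    LinearMap.mul' ℂ A ((TensorProduct.map S (LinearMap.id : A →ₗ[ℂ] A)) (Δ x))
      = (TensorProduct.rid ℂ A)
          ((TensorProduct.map (LinearMap.id : A →ₗ[ℂ] A) (ε ∘ₗ LinearMap.mulLeft ℂ x)) (Δ 1))
  antipode_right : ∀ x : A,
    LinearMap.mul' ℂ A ((TensorProduct.map (LinearMap.id : A →ₗ[ℂ] A) S) (Δ x))
      = (TensorProduct.lid ℂ A)
          ((TensorProduct.map (ε ∘ₗ LinearMap.mulRight ℂ x) (LinearMap.id : A →ₗ[ℂ] A)) (Δ 1))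
  antipode_mid : ∀ x : A,
    LinearMap.mul' ℂ A
      ((TensorProduct.map (LinearMap.mul' ℂ A ∘ₗ TensorProduct.map S (LinearMap.id : A →ₗ[ℂ] A)) S)
        ((TensorProduct.map Δ (LinearMap.id : A →ₗ[ℂ] A)) (Δ x))) = S x
  S_Sinv : ∀ x : A, S (Sinv x) = x
  Sinv_S : ∀ x : A, Sinv (S x) = x
  S_antimul : ∀ x y : A, S (x * y) = S y * S x
  S_anticomul : ∀ x : A, Δ (S x) = (TensorProduct.comm ℂ A A) ((TensorProduct.map S S) (Δ x))
  S_star : ∀ x : A, star (S (star x)) = Sinv x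

/-- The set of elements commuting with everything. -/
def centerSet (R : Type) [Mul R] : Set R := {z | ∀ r : R, z * r = r * z}

namespace WeakHopfAlgebra

variable {A : Type} [Ring A] [Algebra ℂ A] [StarRing A] [StarModule ℂ A]

/-- `Σ x₍₁₎ · S(x₍₂₎)`. -/
def swIdS (W : WeakHopfAlgebra A) (x : A) : A :=
  LinearMap.mul' ℂ A ((TensorProduct.map (LinearMap.id : A →ₗ[ℂ] A) W.S) (W.Δ x))

/-- `Σ S(x₍₁₎) · x₍₂₎`. -/
def swSId (W : WeakHopfAlgebra A) (x : A) : A :=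
  LinearMap.mul' ℂ A ((TensorProduct.map W.S (LinearMap.id : A →ₗ[ℂ] A)) (W.Δ x))

/-- `Σ x₍₂₎ · S⁻¹(x₍₁₎)`. -/
def swIdSinv (W : WeakHopfAlgebra A) (x : A) : A :=
  LinearMap.mul' ℂ A
    ((TensorProduct.map (LinearMap.id : A →ₗ[ℂ] A) W.Sinv) ((TensorProduct.comm ℂ A A) (W.Δ x)))

/-- `Σ S⁻¹(x₍₂₎) · x₍₁₎`. -/
def swSinvId (W : WeakHopfAlgebra A) (x : A) : A :=
  LinearMap.mul' ℂ A
    ((TensorProduct.map W.Sinv (LinearMap.id : A →ₗ[ℂ] A)) ((TensorProduct.comm ℂ A A) (W.Δ x)))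

/-- The left subalgebra `A_L = {(φ ⊗ id)(Δ 1) : φ ∈ A*}`. -/
def AL (W : WeakHopfAlgebra A) : Set A :=
  {a | ∃ φ : A →ₗ[ℂ] ℂ,
    a = (TensorProduct.lid ℂ A) ((TensorProduct.map φ (LinearMap.id : A →ₗ[ℂ] A)) (W.Δ 1))}

/-- The right subalgebra `A_R = {(id ⊗ φ)(Δ 1) : φ ∈ A*}`. -/
def AR (W : WeakHopfAlgebra A) : Set A :=
  {a | ∃ φ : A →ₗ[ℂ] ℂ,
    a = (TensorProduct.rid ℂ A) ((TensorProduct.map (LinearMap.id : A →ₗ[ℂ] A) φ) (W.Δ 1))}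

/-- A left integral: `a · l = Σ a₍₁₎ S(a₍₂₎) · l` for all `a`. -/
def IsLeftIntegral (W : WeakHopfAlgebra A) (l : A) : Prop := ∀ a : A, a * l = W.swIdS a * l

/-- A right integral: `r · a = r · Σ S(a₍₁₎) a₍₂₎` for all `a`. -/
def IsRightIntegral (W : WeakHopfAlgebra A) (r : A) : Prop := ∀ a : A, r * a = r * W.swSId a

/-- A normalized Haar integral. -/
def IsHaar (W : WeakHopfAlgebra A) (h : A) : Prop :=
  W.IsLeftIntegral h ∧ W.IsRightIntegral h ∧ W.swSId h = 1 ∧ W.swIdS h = 1 ∧ W.S h = h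

/-- The canonical left action of a functional `λ ∈ A*` on `A`:
`λ ⇀ a = Σ a₍₁₎ · ⟨λ, a₍₂₎⟩`. -/
def lact (W : WeakHopfAlgebra A) (lam : A →ₗ[ℂ] ℂ) : A →ₗ[ℂ] A :=
  (TensorProduct.rid ℂ A).toLinearMap ∘ₗ
    (TensorProduct.map (LinearMap.id : A →ₗ[ℂ] A) lam) ∘ₗ W.Δ

/-- `λ ∈ A*` is a left integral of the dual weak Hopf algebra:
`λ ⇀ a ∈ A_L` for all `a ∈ A`. -/
def IsDualLeftIntegral (W : WeakHopfAlgebra A) (lam : A →ₗ[ℂ] ℂ) : Prop :=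
  ∀ a : A, W.lact lam a ∈ W.AL

/-- A dual pair of left integrals `(l, λ)`. -/
def IsDualPair (W : WeakHopfAlgebra A) (l : A) (lam : A →ₗ[ℂ] ℂ) : Prop :=
  W.IsLeftIntegral l ∧ W.IsDualLeftIntegral lam ∧
  W.lact lam l = 1 ∧
  (∀ a : A,
    (TensorProduct.rid ℂ A)
      ((TensorProduct.map (LinearMap.id : A →ₗ[ℂ] A) (lam ∘ₗ LinearMap.mulLeft ℂ a)) (W.Δ l))
      = W.S a) ∧
  (∀ a : A,
    (TensorProduct.lid ℂ A)
      ((TensorProduct.map (lam ∘ₗ LinearMap.mulRight ℂ a ∘ₗ W.Sinv)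
        (LinearMap.id : A →ₗ[ℂ] A)) (W.Δ l)) = a)

end WeakHopfAlgebra

/-- A (left) module `*`-algebra over a weak `*`-Hopf algebra. -/
structure ModuleAlgebra {A : Type} [Ring A] [Algebra ℂ A] [StarRing A] [StarModule ℂ A]
    (W : WeakHopfAlgebra A) (M : Type) [Ring M] [Algebra ℂ M] [StarRing M] [StarModule ℂ M] where
  act : A →ₗ[ℂ] M →ₗ[ℂ] M
  act_mul : ∀ (a b : A) (m : M), act (a * b) m = act a (act b m)
  act_one : ∀ m : M, act 1 m = m
  act_mul' : ∀ (a : A) (m n : M),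
    act a (m * n) = LinearMap.mul' ℂ M ((TensorProduct.map (act.flip m) (act.flip n)) (W.Δ a))
  act_star : ∀ (a : A) (m : M), star (act a m) = act (star (W.S a)) (star m)
  act_unit : ∀ a : A, act a 1 = act (W.swIdS a) 1

namespace ModuleAlgebra

variable {A : Type} [Ring A] [Algebra ℂ A] [StarRing A] [StarModule ℂ A]
variable {M : Type} [Ring M] [Algebra ℂ M] [StarRing M] [StarModule ℂ M]
variable {W : WeakHopfAlgebra A}

/-- `M_R = A ▷ 1_M`. -/
def MR (MA : ModuleAlgebra W M) : Set M := Set.range fun a : A => MA.act a 1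

/-- The fixed point algebra `M^A`. -/
def fixed (MA : ModuleAlgebra W M) : Set M :=
  {n | ∀ (a : A) (m : M), MA.act a (m * n) = MA.act a m * n}

end ModuleAlgebra

section Crossed

variable {A : Type} [Ring A] [Algebra ℂ A] [StarRing A] [StarModule ℂ A]
variable {M : Type} [Ring M] [Algebra ℂ M] [StarRing M] [StarModule ℂ M]
variable {W : WeakHopfAlgebra A}

/-- The subspace of `M ⊗ A` by which one divides to form the crossed product
`M ⋊ A = M ⊗_{A_L} A`. -/
def crossedRel (MA : ModuleAlgebra W M) : Submodule ℂ (M ⊗[ℂ] A) :=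
  Submodule.span ℂ
    {x | ∃ (m : M) (a b : A), b ∈ W.AL ∧
      x = (m * MA.act b 1) ⊗ₜ[ℂ] a - m ⊗ₜ[ℂ] (b * a)}

/-- The crossed product `M ⋊ A` as a vector space. -/
abbrev Crossed (MA : ModuleAlgebra W M) : Type := (M ⊗[ℂ] A) ⧸ crossedRel MA

/-- The canonical projection `M ⊗ A → M ⋊ A`; `cmk MA (m ⊗ₜ a)` is `m ⋊ a`. -/
def cmk (MA : ModuleAlgebra W M) : M ⊗[ℂ] A →ₗ[ℂ] Crossed MA := (crossedRel MA).mkQ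

/-- The embedding `M → M ⋊ A`, `m ↦ m ⋊ 1`. -/
def iM (MA : ModuleAlgebra W M) : M →ₗ[ℂ] Crossed MA :=
  cmk MA ∘ₗ (TensorProduct.mk ℂ M A).flip (1 : A)

/-- The map `A → M ⋊ A`, `a ↦ 1 ⋊ a`. -/
def iA (MA : ModuleAlgebra W M) : A →ₗ[ℂ] Crossed MA :=
  cmk MA ∘ₗ (TensorProduct.mk ℂ M A) (1 : M)

/-- The unit `1 ⋊ 1` of `M ⋊ A`. -/
def oneC (MA : ModuleAlgebra W M) : Crossed MA := cmk MA ((1 : M) ⊗ₜ[ℂ] (1 : A))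

/-- The multiplication of the crossed product `M ⋊ A`
(whose existence is the content of Theorem 3.1), as a bundled bilinear map
together with its defining formula on generators:
`(m ⋊ a)(m' ⋊ a') = Σ m (a₍₁₎ ▷ m') ⋊ a₍₂₎ a'`. -/
structure CrossedMul (MA : ModuleAlgebra W M) where
  mul : Crossed MA →ₗ[ℂ] Crossed MA →ₗ[ℂ] Crossed MA
  mul_def : ∀ (m m' : M) (a a' : A),
    mul (cmk MA (m ⊗ₜ[ℂ] a)) (cmk MA (m' ⊗ₜ[ℂ] a'))
      = cmk MA ((TensorProduct.map ((LinearMap.mulLeft ℂ m) ∘ₗ (MA.act.flip m'))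
          (LinearMap.mulRight ℂ a')) (W.Δ a))

/-- The star operation of the crossed product `M ⋊ A`
(whose existence is part of Theorem 3.1):
`(m ⋊ a)* = Σ (a₍₁₎* ▷ m*) ⋊ a₍₂₎*`. -/
structure CrossedStar (MA : ModuleAlgebra W M) where
  st : Crossed MA →+ Crossed MA
  st_smul : ∀ (c : ℂ) (x : Crossed MA), st (c • x) = (starRingEnd ℂ c) • st x
  st_def : ∀ (m : M) (a : A),
    st (cmk MA (m ⊗ₜ[ℂ] a))
      = cmk MA ((TensorProduct.map (MA.act.flip (star m)) (LinearMap.id : A →ₗ[ℂ] A))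
          (W.Δ (star a)))

/-- The multiplication on `(M ⋊ A) ⊗ B` induced by a crossed product
multiplication on `M ⋊ A` and the algebra structure of `B`. -/
def mulT (MA : ModuleAlgebra W M) (CS : CrossedMul MA) (B : Type) [Ring B] [Algebra ℂ B] :
    Crossed MA ⊗[ℂ] B →ₗ[ℂ] Crossed MA ⊗[ℂ] B →ₗ[ℂ] Crossed MA ⊗[ℂ] B :=
  TensorProduct.lift
    ((TensorProduct.mapBilinear (RingHom.id ℂ) (Crossed MA) B (Crossed MA) B).compl₁₂ CS.mul
      (LinearMap.mul ℂ B))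

end Crossed

section AuxWHA

open TensorProduct LinearMap

namespace WeakHopfAlgebra

variable {A : Type} [Ring A] [Algebra ℂ A] [StarRing A] [StarModule ℂ A]
variable (W : WeakHopfAlgebra A)

/-- `a ↦ Δ1 * (a ⊗ₜ 1)` -/
def dL : A →ₗ[ℂ] A ⊗[ℂ] A := mulLeft ℂ (W.Δ 1) ∘ₗ (TensorProduct.mk ℂ A A).flip 1
/-- `a ↦ (a ⊗ₜ 1) * Δ1` -/
def dR : A →ₗ[ℂ] A ⊗[ℂ] A := mulRight ℂ (W.Δ 1) ∘ₗ (TensorProduct.mk ℂ A A).flip 1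
/-- `a ↦ Δ1 * (1 ⊗ₜ a)` -/
def dL2 : A →ₗ[ℂ] A ⊗[ℂ] A := mulLeft ℂ (W.Δ 1) ∘ₗ TensorProduct.mk ℂ A A 1
/-- `a ↦ (1 ⊗ₜ a) * Δ1` -/
def dR2 : A →ₗ[ℂ] A ⊗[ℂ] A := mulRight ℂ (W.Δ 1) ∘ₗ TensorProduct.mk ℂ A A 1

/-- `ε_t(a) = Σ ε(1₍₁₎ a) 1₍₂₎`. -/
def epsT : A →ₗ[ℂ] A :=
  (TensorProduct.lid ℂ A).toLinearMap ∘ₗ TensorProduct.map W.ε LinearMap.id ∘ₗ W.dL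
/-- `ε_s(a) = Σ 1₍₁₎ ε(a 1₍₂₎)`. -/
def epsS : A →ₗ[ℂ] A :=
  (TensorProduct.rid ℂ A).toLinearMap ∘ₗ TensorProduct.map LinearMap.id W.ε ∘ₗ W.dR2
/-- `θ(a) = Σ ε(a 1₍₁₎) 1₍₂₎`. -/
def thT : A →ₗ[ℂ] A :=
  (TensorProduct.lid ℂ A).toLinearMap ∘ₗ TensorProduct.map W.ε LinearMap.id ∘ₗ W.dR
/-- `θ̃(a) = Σ 1₍₁₎ ε(1₍₂₎ a)`. -/
def thS : A →ₗ[ℂ] A :=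
  (TensorProduct.rid ℂ A).toLinearMap ∘ₗ TensorProduct.map LinearMap.id W.ε ∘ₗ W.dL2

variable {ι : Type} (F : Finset ι) (f g : ι → A)

lemma dL_apply (hF : W.Δ 1 = ∑ i ∈ F, f i ⊗ₜ[ℂ] g i) (a : A) :
    W.dL a = ∑ i ∈ F, (f i * a) ⊗ₜ[ℂ] g i := by
  simp only [dL, comp_apply, flip_apply, TensorProduct.mk_apply, mulLeft_apply, hF,
    Finset.sum_mul, Algebra.TensorProduct.tmul_mul_tmul, mul_one]

lemma dR_apply (hF : W.Δ 1 = ∑ i ∈ F, f i ⊗ₜ[ℂ] g i) (a : A) :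
    W.dR a = ∑ i ∈ F, (a * f i) ⊗ₜ[ℂ] g i := by
  simp only [dR, comp_apply, flip_apply, TensorProduct.mk_apply, mulRight_apply, hF,
    Finset.mul_sum, Algebra.TensorProduct.tmul_mul_tmul, one_mul]

lemma dL2_apply (hF : W.Δ 1 = ∑ i ∈ F, f i ⊗ₜ[ℂ] g i) (a : A) :
    W.dL2 a = ∑ i ∈ F, f i ⊗ₜ[ℂ] (g i * a) := by
  simp only [dL2, comp_apply, TensorProduct.mk_apply, mulLeft_apply, hF,
    Finset.sum_mul, Algebra.TensorProduct.tmul_mul_tmul, mul_one]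

lemma dR2_apply (hF : W.Δ 1 = ∑ i ∈ F, f i ⊗ₜ[ℂ] g i) (a : A) :
    W.dR2 a = ∑ i ∈ F, f i ⊗ₜ[ℂ] (a * g i) := by
  simp only [dR2, comp_apply, TensorProduct.mk_apply, mulRight_apply, hF,
    Finset.mul_sum, Algebra.TensorProduct.tmul_mul_tmul, one_mul]

lemma epsT_apply (hF : W.Δ 1 = ∑ i ∈ F, f i ⊗ₜ[ℂ] g i) (a : A) :
    W.epsT a = ∑ i ∈ F, W.ε (f i * a) • g i := by
  simp only [epsT, comp_apply, W.dL_apply F f g hF a, map_sum, TensorProduct.map_tmul,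
    LinearMap.id_coe, id_eq, LinearEquiv.coe_coe, TensorProduct.lid_tmul]

lemma epsS_apply (hF : W.Δ 1 = ∑ i ∈ F, f i ⊗ₜ[ℂ] g i) (a : A) :
    W.epsS a = ∑ i ∈ F, W.ε (a * g i) • f i := by
  simp only [epsS, comp_apply, W.dR2_apply F f g hF a, map_sum, TensorProduct.map_tmul,
    LinearMap.id_coe, id_eq, LinearEquiv.coe_coe, TensorProduct.rid_tmul]

lemma thT_apply (hF : W.Δ 1 = ∑ i ∈ F, f i ⊗ₜ[ℂ] g i) (a : A) :
    W.thT a = ∑ i ∈ F, W.ε (a * f i) • g i := by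
  simp only [thT, comp_apply, W.dR_apply F f g hF a, map_sum, TensorProduct.map_tmul,
    LinearMap.id_coe, id_eq, LinearEquiv.coe_coe, TensorProduct.lid_tmul]

lemma thS_apply (hF : W.Δ 1 = ∑ i ∈ F, f i ⊗ₜ[ℂ] g i) (a : A) :
    W.thS a = ∑ i ∈ F, W.ε (g i * a) • f i := by
  simp only [thS, comp_apply, W.dL2_apply F f g hF a, map_sum, TensorProduct.map_tmul,
    LinearMap.id_coe, id_eq, LinearEquiv.coe_coe, TensorProduct.rid_tmul]

lemma epsT_eq (x : A) :
    W.epsT x = (TensorProduct.lid ℂ A)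
      ((TensorProduct.map (W.ε ∘ₗ LinearMap.mulRight ℂ x) (LinearMap.id : A →ₗ[ℂ] A)) (W.Δ 1)) := by
  obtain ⟨E, hE⟩ := TensorProduct.exists_finset (W.Δ 1)
  rw [W.epsT_apply E Prod.fst Prod.snd hE x, hE]
  simp only [map_sum, TensorProduct.map_tmul, comp_apply, mulRight_apply,
    LinearMap.id_coe, id_eq, LinearEquiv.coe_coe, TensorProduct.lid_tmul]

lemma epsS_eq (x : A) :
    W.epsS x = (TensorProduct.rid ℂ A)
      ((TensorProduct.map (LinearMap.id : A →ₗ[ℂ] A) (W.ε ∘ₗ LinearMap.mulLeft ℂ x)) (W.Δ 1)) := by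
  obtain ⟨E, hE⟩ := TensorProduct.exists_finset (W.Δ 1)
  rw [W.epsS_apply E Prod.fst Prod.snd hE x, hE]
  simp only [map_sum, TensorProduct.map_tmul, comp_apply, mulLeft_apply,
    LinearMap.id_coe, id_eq, LinearEquiv.coe_coe, TensorProduct.rid_tmul]

lemma swIdS_eq_epsT (x : A) : W.swIdS x = W.epsT x := by
  unfold swIdS
  rw [W.antipode_right x, ← W.epsT_eq]

lemma epsT_mem_AL (x : A) : W.epsT x ∈ W.AL :=
  ⟨W.ε ∘ₗ LinearMap.mulRight ℂ x, W.epsT_eq x⟩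

lemma epsS_mem_AR (x : A) : W.epsS x ∈ W.AR :=
  ⟨W.ε ∘ₗ LinearMap.mulLeft ℂ x, W.epsS_eq x⟩

lemma counit_right_sum (x : A) (hF : W.Δ x = ∑ i ∈ F, f i ⊗ₜ[ℂ] g i) :
    ∑ i ∈ F, W.ε (g i) • f i = x := by
  have h := W.counit_right x
  rw [hF] at h
  simpa only [map_sum, TensorProduct.map_tmul, LinearMap.id_coe, id_eq,
    LinearEquiv.coe_coe, TensorProduct.rid_tmul] using h

lemma counit_left_sum (x : A) (hF : W.Δ x = ∑ i ∈ F, f i ⊗ₜ[ℂ] g i) :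
    ∑ i ∈ F, W.ε (f i) • g i = x := by
  have h := W.counit_left x
  rw [hF] at h
  simpa only [map_sum, TensorProduct.map_tmul, LinearMap.id_coe, id_eq,
    LinearEquiv.coe_coe, TensorProduct.lid_tmul] using h

/-- `ε(w ε_t(y)) = ε(w y)`. -/
lemma eps_mul_epsT (w y : A) : W.ε (w * W.epsT y) = W.ε (w * y) := by
  obtain ⟨E, hE⟩ := TensorProduct.exists_finset (W.Δ 1)
  have h := W.counit_weak' w 1 y
  rw [mul_one, hE] at h
  simp only [map_sum, TensorProduct.map_tmul, comp_apply, mulRight_apply, mulLeft_apply,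
    LinearEquiv.coe_coe, TensorProduct.lid_tmul, smul_eq_mul] at h
  rw [W.epsT_apply E Prod.fst Prod.snd hE y, Finset.mul_sum, map_sum, h]
  exact Finset.sum_congr rfl fun p _ => by rw [mul_smul_comm, map_smul, smul_eq_mul]

/-- `ε(ε_s(y) w) = ε(y w)`. -/
lemma epsS_mul_eps (w y : A) : W.ε (W.epsS y * w) = W.ε (y * w) := by
  obtain ⟨E, hE⟩ := TensorProduct.exists_finset (W.Δ 1)
  have h := W.counit_weak' y 1 w
  rw [mul_one, hE] at h
  simp only [map_sum, TensorProduct.map_tmul, comp_apply, mulRight_apply, mulLeft_apply,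
    LinearEquiv.coe_coe, TensorProduct.lid_tmul, smul_eq_mul] at h
  rw [W.epsS_apply E Prod.fst Prod.snd hE y, Finset.sum_mul, map_sum, h]
  exact Finset.sum_congr rfl fun p _ => by
    rw [smul_mul_assoc, map_smul, smul_eq_mul, mul_comm]

end WeakHopfAlgebra

end AuxWHA

section AuxWHA2

open TensorProduct LinearMap

lemma tensorStar_tmul {A : Type} [Ring A] [Algebra ℂ A] [StarRing A] [StarModule ℂ A]
    (a b : A) : tensorStar A A (a ⊗ₜ[ℂ] b) = star a ⊗ₜ[ℂ] star b := rfl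

namespace WeakHopfAlgebra

variable {A : Type} [Ring A] [Algebra ℂ A] [StarRing A] [StarModule ℂ A]
variable (W : WeakHopfAlgebra A)
variable {ι : Type} (F : Finset ι) (f g : ι → A)

/-- star-invariance of `Δ1`, in representation form. -/
lemma delta_one_star_rep (hF : W.Δ 1 = ∑ i ∈ F, f i ⊗ₜ[ℂ] g i) :
    W.Δ 1 = ∑ i ∈ F, star (f i) ⊗ₜ[ℂ] star (g i) := by
  have h := W.Δ_star 1
  rw [star_one] at h
  conv_lhs => rw [h, hF]
  rw [map_sum]
  exact Finset.sum_congr rfl fun i _ => tensorStar_tmul _ _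

/-- representation of `Δ(x*)` induced by one of `Δ x`. -/
lemma delta_star_rep (x : A) (hF : W.Δ x = ∑ i ∈ F, f i ⊗ₜ[ℂ] g i) :
    W.Δ (star x) = ∑ i ∈ F, star (f i) ⊗ₜ[ℂ] star (g i) := by
  rw [W.Δ_star, hF, map_sum]
  exact Finset.sum_congr rfl fun i _ => tensorStar_tmul _ _

/-- `ε(x*) = conj (ε x)`. -/
lemma eps_star (x : A) : W.ε (star x) = starRingEnd ℂ (W.ε x) := by
  have key : ∀ y : A, starRingEnd ℂ (W.ε (star y)) = W.ε y := by
    intro y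
    obtain ⟨S, hS⟩ := TensorProduct.exists_finset (W.Δ y)
    have hS' := W.delta_star_rep S Prod.fst Prod.snd y hS
    have h2 := W.counit_right_sum S (fun s => star s.1) (fun s => star s.2) (star y) hS'
    have h3 : ∑ s ∈ S, starRingEnd ℂ (W.ε (star s.2)) • s.1 = y := by
      have h := congrArg star h2
      rw [star_sum, star_star] at h
      rw [← h]
      exact Finset.sum_congr rfl fun s _ => by
        rw [star_smul, star_star, starRingEnd_apply]
    have h4 : W.ε y = ∑ s ∈ S, starRingEnd ℂ (W.ε (star s.2)) * W.ε s.1 := by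
      conv_lhs => rw [← h3]
      rw [map_sum]
      exact Finset.sum_congr rfl fun s _ => by rw [map_smul, smul_eq_mul]
    have h6 := W.counit_left_sum S Prod.fst Prod.snd y hS
    have h5 : starRingEnd ℂ (W.ε (star y)) = ∑ s ∈ S, W.ε s.1 * starRingEnd ℂ (W.ε (star s.2)) := by
      conv_lhs => rw [← h6]
      rw [star_sum, map_sum, map_sum]
      refine Finset.sum_congr rfl fun s _ => ?_
      simp only [star_smul, map_smul, smul_eq_mul, map_mul, starRingEnd_apply, star_star,
        star_mul']
    rw [h4, h5]
    exact Finset.sum_congr rfl fun s _ => mul_comm _ _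
  rw [← key x, starRingEnd_self_apply]

/-- `θ = star ∘ ε_t ∘ star`. -/
lemma star_epsT_star (z : A) : star (W.epsT (star z)) = W.thT z := by
  obtain ⟨E, hE⟩ := TensorProduct.exists_finset (W.Δ 1)
  have hE' := W.delta_one_star_rep E Prod.fst Prod.snd hE
  rw [W.epsT_apply E (fun p => star p.1) (fun p => star p.2) hE' (star z),
    W.thT_apply E Prod.fst Prod.snd hE z, star_sum]
  refine Finset.sum_congr rfl fun p _ => ?_
  rw [star_smul, star_star, ← star_mul, W.eps_star, starRingEnd_apply, star_star]

/-- `θ̃ = star ∘ ε_s ∘ star`. -/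
lemma star_epsS_star (z : A) : star (W.epsS (star z)) = W.thS z := by
  obtain ⟨E, hE⟩ := TensorProduct.exists_finset (W.Δ 1)
  have hE' := W.delta_one_star_rep E Prod.fst Prod.snd hE
  rw [W.epsS_apply E (fun p => star p.1) (fun p => star p.2) hE' (star z),
    W.thS_apply E Prod.fst Prod.snd hE z, star_sum]
  refine Finset.sum_congr rfl fun p _ => ?_
  rw [star_smul, star_star, ← star_mul, W.eps_star, starRingEnd_apply, star_star]

end WeakHopfAlgebra
end AuxWHA2

section AuxWHA3

open TensorProduct LinearMap

namespace WeakHopfAlgebra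

variable {A : Type} [Ring A] [Algebra ℂ A] [StarRing A] [StarModule ℂ A]
variable (W : WeakHopfAlgebra A)
variable {ι : Type} (F : Finset ι) (f g : ι → A)

/-- contraction of the middle leg of `(A ⊗ A) ⊗ A` by `ε`. -/
def psiA : (A ⊗[ℂ] A) ⊗[ℂ] A →ₗ[ℂ] A ⊗[ℂ] A :=
  TensorProduct.map
    ((TensorProduct.rid ℂ A).toLinearMap ∘ₗ TensorProduct.map LinearMap.id W.ε) LinearMap.id

lemma psiA_tmul (a b c : A) : W.psiA ((a ⊗ₜ[ℂ] b) ⊗ₜ[ℂ] c) = W.ε b • (a ⊗ₜ[ℂ] c) := by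
  simp only [psiA, TensorProduct.map_tmul, comp_apply, LinearMap.id_coe, id_eq,
    LinearEquiv.coe_coe, TensorProduct.rid_tmul, TensorProduct.smul_tmul']

lemma psiA_delta (x c : A) : W.psiA (W.Δ x ⊗ₜ[ℂ] c) = x ⊗ₜ[ℂ] c := by
  simp only [psiA, TensorProduct.map_tmul, LinearMap.id_coe, id_eq, comp_apply,
    LinearEquiv.coe_coe]
  rw [W.counit_right x]

/-- contraction of the middle leg of `A ⊗ (A ⊗ A)` by `ε`. -/
def psiB : A ⊗[ℂ] (A ⊗[ℂ] A) →ₗ[ℂ] A ⊗[ℂ] A :=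
  TensorProduct.map LinearMap.id
    ((TensorProduct.lid ℂ A).toLinearMap ∘ₗ TensorProduct.map W.ε LinearMap.id)

lemma psiB_tmul (a b c : A) : W.psiB (a ⊗ₜ[ℂ] (b ⊗ₜ[ℂ] c)) = W.ε b • (a ⊗ₜ[ℂ] c) := by
  simp only [psiB, TensorProduct.map_tmul, comp_apply, LinearMap.id_coe, id_eq,
    LinearEquiv.coe_coe, TensorProduct.lid_tmul, TensorProduct.tmul_smul]

lemma psiB_delta (c x : A) : W.psiB (c ⊗ₜ[ℂ] W.Δ x) = c ⊗ₜ[ℂ] x := by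
  simp only [psiB, TensorProduct.map_tmul, LinearMap.id_coe, id_eq, comp_apply,
    LinearEquiv.coe_coe]
  rw [W.counit_left x]

set_option synthInstance.maxHeartbeats 1000000 in
/-- `(id ⊗ Δ)(Δ 1) = (1 ⊗ Δ1) · assoc (Δ1 ⊗ 1)`. -/
lemma coassoc1_left : (TensorProduct.map (LinearMap.id : A →ₗ[ℂ] A) W.Δ) (W.Δ 1)
    = ((1:A) ⊗ₜ[ℂ] W.Δ 1) * (TensorProduct.assoc ℂ A A A) (W.Δ 1 ⊗ₜ[ℂ] (1:A)) := by
  obtain ⟨E, hE⟩ := TensorProduct.exists_finset (W.Δ 1)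
  rw [← W.coassoc 1, ← W.unit_weak', hE]
  simp only [TensorProduct.tmul_sum, TensorProduct.sum_tmul, map_sum,
    TensorProduct.assoc_symm_tmul, TensorProduct.assoc_tmul, Finset.sum_mul_sum,
    Algebra.TensorProduct.tmul_mul_tmul, one_mul, mul_one]

/-- `(id ⊗ ε_t)(Δ b) = Δ1 · (b ⊗ 1)`. -/
lemma I1 (b : A) :
    TensorProduct.map (LinearMap.id : A →ₗ[ℂ] A) W.epsT (W.Δ b) = W.dL b := by
  obtain ⟨E, hE⟩ := TensorProduct.exists_finset (W.Δ 1)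
  obtain ⟨S, hS⟩ := TensorProduct.exists_finset (W.Δ b)
  have hX : (TensorProduct.assoc ℂ A A A).symm ((1:A) ⊗ₜ[ℂ] W.Δ 1) * (W.Δ b ⊗ₜ[ℂ] (1:A))
      = ∑ p ∈ E, W.Δ (p.1 * b) ⊗ₜ[ℂ] p.2 := by
    have h1 : (W.Δ b ⊗ₜ[ℂ] (1:A)) = (W.Δ 1 ⊗ₜ[ℂ] (1:A)) * (W.Δ b ⊗ₜ[ℂ] (1:A)) := by
      rw [Algebra.TensorProduct.tmul_mul_tmul, ← W.Δ_mul, one_mul, mul_one]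
    conv_lhs => rw [h1]
    rw [← mul_assoc, W.unit_weak', hE, map_sum, Finset.sum_mul]
    refine Finset.sum_congr rfl fun p _ => ?_
    simp only [TensorProduct.map_tmul, LinearMap.id_coe, id_eq]
    rw [Algebra.TensorProduct.tmul_mul_tmul, ← W.Δ_mul, mul_one]
  have hXL : (TensorProduct.assoc ℂ A A A).symm ((1:A) ⊗ₜ[ℂ] W.Δ 1) * (W.Δ b ⊗ₜ[ℂ] (1:A))
      = ∑ p ∈ E, ∑ s ∈ S, (s.1 ⊗ₜ[ℂ] (p.1 * s.2)) ⊗ₜ[ℂ] p.2 := by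
    rw [hE, hS]
    simp only [TensorProduct.tmul_sum, TensorProduct.sum_tmul, map_sum,
      TensorProduct.assoc_symm_tmul, Finset.sum_mul_sum,
      Algebra.TensorProduct.tmul_mul_tmul, one_mul, mul_one]
  have e1 : W.psiA (∑ p ∈ E, ∑ s ∈ S, (s.1 ⊗ₜ[ℂ] (p.1 * s.2)) ⊗ₜ[ℂ] p.2)
      = ∑ p ∈ E, ∑ s ∈ S, W.ε (p.1 * s.2) • (s.1 ⊗ₜ[ℂ] p.2) := by
    rw [map_sum]
    refine Finset.sum_congr rfl fun p _ => ?_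
    rw [map_sum]
    exact Finset.sum_congr rfl fun s _ => W.psiA_tmul _ _ _
  have e2 : W.psiA (∑ p ∈ E, W.Δ (p.1 * b) ⊗ₜ[ℂ] p.2) = ∑ p ∈ E, (p.1 * b) ⊗ₜ[ℂ] p.2 := by
    rw [map_sum]
    exact Finset.sum_congr rfl fun p _ => W.psiA_delta _ _
  have e3 : TensorProduct.map (LinearMap.id : A →ₗ[ℂ] A) W.epsT (W.Δ b)
      = ∑ s ∈ S, ∑ p ∈ E, W.ε (p.1 * s.2) • (s.1 ⊗ₜ[ℂ] p.2) := by
    rw [hS, map_sum]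
    refine Finset.sum_congr rfl fun s _ => ?_
    simp only [TensorProduct.map_tmul, LinearMap.id_coe, id_eq]
    rw [W.epsT_apply E Prod.fst Prod.snd hE s.2, TensorProduct.tmul_sum]
    exact Finset.sum_congr rfl fun p _ => by rw [TensorProduct.tmul_smul]
  have e4 := congrArg W.psiA (hXL.symm.trans hX)
  rw [e1, e2] at e4
  rw [e3, Finset.sum_comm, e4, W.dL_apply E Prod.fst Prod.snd hE b]

/-- `(ε_s ⊗ id)(Δ b) = (1 ⊗ b) · Δ1`. -/
lemma I1' (b : A) :
    TensorProduct.map W.epsS (LinearMap.id : A →ₗ[ℂ] A) (W.Δ b) = W.dR2 b := by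
  obtain ⟨E, hE⟩ := TensorProduct.exists_finset (W.Δ 1)
  obtain ⟨S, hS⟩ := TensorProduct.exists_finset (W.Δ b)
  have hY : ((1:A) ⊗ₜ[ℂ] W.Δ b) * (TensorProduct.assoc ℂ A A A) (W.Δ 1 ⊗ₜ[ℂ] (1:A))
      = ∑ q ∈ E, q.1 ⊗ₜ[ℂ] W.Δ (b * q.2) := by
    have h1 : ((1:A) ⊗ₜ[ℂ] W.Δ b) = ((1:A) ⊗ₜ[ℂ] W.Δ b) * ((1:A) ⊗ₜ[ℂ] W.Δ 1) := by
      rw [Algebra.TensorProduct.tmul_mul_tmul, ← W.Δ_mul, mul_one, mul_one]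
    conv_lhs => rw [h1]
    rw [mul_assoc, ← W.coassoc1_left, hE, map_sum, Finset.mul_sum]
    refine Finset.sum_congr rfl fun q _ => ?_
    simp only [TensorProduct.map_tmul, LinearMap.id_coe, id_eq]
    rw [Algebra.TensorProduct.tmul_mul_tmul, one_mul, ← W.Δ_mul]
  have hYL : ((1:A) ⊗ₜ[ℂ] W.Δ b) * (TensorProduct.assoc ℂ A A A) (W.Δ 1 ⊗ₜ[ℂ] (1:A))
      = ∑ s ∈ S, ∑ p ∈ E, p.1 ⊗ₜ[ℂ] ((s.1 * p.2) ⊗ₜ[ℂ] s.2) := by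
    rw [hE, hS]
    simp only [TensorProduct.tmul_sum, TensorProduct.sum_tmul, map_sum,
      TensorProduct.assoc_tmul, Finset.sum_mul_sum,
      Algebra.TensorProduct.tmul_mul_tmul, one_mul, mul_one]
  have e1 : W.psiB (∑ s ∈ S, ∑ p ∈ E, p.1 ⊗ₜ[ℂ] ((s.1 * p.2) ⊗ₜ[ℂ] s.2))
      = ∑ s ∈ S, ∑ p ∈ E, W.ε (s.1 * p.2) • (p.1 ⊗ₜ[ℂ] s.2) := by
    rw [map_sum]
    refine Finset.sum_congr rfl fun s _ => ?_
    rw [map_sum]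
    exact Finset.sum_congr rfl fun p _ => W.psiB_tmul _ _ _
  have e2 : W.psiB (∑ q ∈ E, q.1 ⊗ₜ[ℂ] W.Δ (b * q.2)) = ∑ q ∈ E, q.1 ⊗ₜ[ℂ] (b * q.2) := by
    rw [map_sum]
    exact Finset.sum_congr rfl fun q _ => W.psiB_delta _ _
  have e3 : TensorProduct.map W.epsS (LinearMap.id : A →ₗ[ℂ] A) (W.Δ b)
      = ∑ s ∈ S, ∑ p ∈ E, W.ε (s.1 * p.2) • (p.1 ⊗ₜ[ℂ] s.2) := by
    rw [hS, map_sum]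
    refine Finset.sum_congr rfl fun s _ => ?_
    simp only [TensorProduct.map_tmul, LinearMap.id_coe, id_eq]
    rw [W.epsS_apply E Prod.fst Prod.snd hE s.1, TensorProduct.sum_tmul]
    exact Finset.sum_congr rfl fun p _ => by rw [TensorProduct.smul_tmul']
  have e4 := congrArg W.psiB (hYL.symm.trans hY)
  rw [e1, e2] at e4
  rw [e3, e4, W.dR2_apply E Prod.fst Prod.snd hE b]

end WeakHopfAlgebra
end AuxWHA3

section AuxWHA4

open TensorProduct LinearMap

namespace WeakHopfAlgebra

variable {A : Type} [Ring A] [Algebra ℂ A] [StarRing A] [StarModule ℂ A]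
variable (W : WeakHopfAlgebra A)

lemma epsT_comp_lemma (z : A) :
    (W.ε ∘ₗ mulLeft ℂ z) ∘ₗ W.epsT = W.ε ∘ₗ mulLeft ℂ z := by
  ext y
  simp only [comp_apply, mulLeft_apply]
  exact W.eps_mul_epsT z y

lemma epsS_comp_lemma (z : A) :
    (W.ε ∘ₗ mulRight ℂ z) ∘ₗ W.epsS = W.ε ∘ₗ mulRight ℂ z := by
  ext y
  simp only [comp_apply, mulRight_apply]
  exact W.epsS_mul_eps z y

/-- `Σ b₍₁₎ ε(z b₍₂₎) = ε_s(z) b`. -/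
lemma R_lem (z b : A) :
    (TensorProduct.rid ℂ A) ((TensorProduct.map (LinearMap.id : A →ₗ[ℂ] A)
      (W.ε ∘ₗ mulLeft ℂ z)) (W.Δ b)) = W.epsS z * b := by
  obtain ⟨E, hE⟩ := TensorProduct.exists_finset (W.Δ 1)
  have hcomp := TensorProduct.map_comp (LinearMap.id : A →ₗ[ℂ] A)
    (W.ε ∘ₗ mulLeft ℂ z) LinearMap.id W.epsT
  rw [LinearMap.id_comp, W.epsT_comp_lemma] at hcomp
  rw [hcomp, LinearMap.comp_apply, W.I1 b, W.dL_apply E Prod.fst Prod.snd hE b,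
    W.epsS_apply E Prod.fst Prod.snd hE z, Finset.sum_mul, map_sum, map_sum]
  refine Finset.sum_congr rfl fun p _ => ?_
  simp only [TensorProduct.map_tmul, comp_apply, mulLeft_apply, LinearMap.id_coe, id_eq,
    LinearEquiv.coe_coe, TensorProduct.rid_tmul, smul_mul_assoc]

/-- `Σ ε(b₍₁₎ z) b₍₂₎ = b ε_t(z)`. -/
lemma R'_lem (z b : A) :
    (TensorProduct.lid ℂ A) ((TensorProduct.map (W.ε ∘ₗ mulRight ℂ z)
      (LinearMap.id : A →ₗ[ℂ] A)) (W.Δ b)) = b * W.epsT z := by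
  obtain ⟨E, hE⟩ := TensorProduct.exists_finset (W.Δ 1)
  have hcomp := TensorProduct.map_comp (W.ε ∘ₗ mulRight ℂ z)
    (LinearMap.id : A →ₗ[ℂ] A) W.epsS LinearMap.id
  rw [LinearMap.id_comp, W.epsS_comp_lemma] at hcomp
  rw [hcomp, LinearMap.comp_apply, W.I1' b, W.dR2_apply E Prod.fst Prod.snd hE b,
    W.epsT_apply E Prod.fst Prod.snd hE z, Finset.mul_sum, map_sum, map_sum]
  refine Finset.sum_congr rfl fun p _ => ?_
  simp only [TensorProduct.map_tmul, comp_apply, mulRight_apply, LinearMap.id_coe, id_eq,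
    LinearEquiv.coe_coe, TensorProduct.lid_tmul, mul_smul_comm]

/-- `Σ b₍₁₎ ε(b₍₂₎ z) = b θ̃(z)`. -/
lemma R''_lem (z b : A) :
    (TensorProduct.rid ℂ A) ((TensorProduct.map (LinearMap.id : A →ₗ[ℂ] A)
      (W.ε ∘ₗ mulRight ℂ z)) (W.Δ b)) = b * W.thS z := by
  obtain ⟨S, hS⟩ := TensorProduct.exists_finset (W.Δ b)
  have hS' := W.delta_star_rep S Prod.fst Prod.snd b hS
  have h := W.R_lem (star z) (star b)
  rw [hS'] at h
  simp only [map_sum, TensorProduct.map_tmul, comp_apply, mulLeft_apply, LinearMap.id_coe,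
    id_eq, LinearEquiv.coe_coe, TensorProduct.rid_tmul] at h
  have h2 := congrArg star h
  rw [star_sum, star_mul, star_star, W.star_epsS_star] at h2
  have h3 : ∀ s : A × A, star (W.ε (star z * star s.2) • star s.1) = W.ε (s.2 * z) • s.1 :=
    fun s => by
      rw [star_smul, star_star, ← star_mul, W.eps_star, starRingEnd_apply, star_star]
  rw [Finset.sum_congr rfl fun s _ => h3 s] at h2
  rw [hS]
  simp only [map_sum, TensorProduct.map_tmul, comp_apply, mulRight_apply, LinearMap.id_coe,
    id_eq, LinearEquiv.coe_coe, TensorProduct.rid_tmul]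
  exact h2

/-- `Σ ε(z b₍₁₎) b₍₂₎ = θ(z) b`. -/
lemma R'''_lem (z b : A) :
    (TensorProduct.lid ℂ A) ((TensorProduct.map (W.ε ∘ₗ mulLeft ℂ z)
      (LinearMap.id : A →ₗ[ℂ] A)) (W.Δ b)) = W.thT z * b := by
  obtain ⟨S, hS⟩ := TensorProduct.exists_finset (W.Δ b)
  have hS' := W.delta_star_rep S Prod.fst Prod.snd b hS
  have h := W.R'_lem (star z) (star b)
  rw [hS'] at h
  simp only [map_sum, TensorProduct.map_tmul, comp_apply, mulRight_apply, LinearMap.id_coe,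
    id_eq, LinearEquiv.coe_coe, TensorProduct.lid_tmul] at h
  have h2 := congrArg star h
  rw [star_sum, star_mul, star_star, W.star_epsT_star] at h2
  have h3 : ∀ s : A × A, star (W.ε (star s.1 * star z) • star s.2) = W.ε (z * s.1) • s.2 :=
    fun s => by
      rw [star_smul, star_star, ← star_mul, W.eps_star, starRingEnd_apply, star_star]
  rw [Finset.sum_congr rfl fun s _ => h3 s] at h2
  rw [hS]
  simp only [map_sum, TensorProduct.map_tmul, comp_apply, mulLeft_apply, LinearMap.id_coe,
    id_eq, LinearEquiv.coe_coe, TensorProduct.lid_tmul]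
  exact h2

lemma thT_eq_epsT {z : A} (hz : z ∈ centerSet A) : W.thT z = W.epsT z := by
  obtain ⟨E, hE⟩ := TensorProduct.exists_finset (W.Δ 1)
  rw [W.thT_apply E Prod.fst Prod.snd hE z, W.epsT_apply E Prod.fst Prod.snd hE z]
  exact Finset.sum_congr rfl fun p _ => by rw [hz p.1]

lemma thS_eq_epsS {z : A} (hz : z ∈ centerSet A) : W.thS z = W.epsS z := by
  obtain ⟨E, hE⟩ := TensorProduct.exists_finset (W.Δ 1)
  rw [W.thS_apply E Prod.fst Prod.snd hE z, W.epsS_apply E Prod.fst Prod.snd hE z]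
  exact Finset.sum_congr rfl fun p _ => by rw [← hz p.2]

lemma mulfun_eq {z : A} (hz : z ∈ centerSet A) :
    W.ε ∘ₗ mulRight ℂ z = W.ε ∘ₗ mulLeft ℂ z := by
  ext y
  simp only [comp_apply, mulRight_apply, mulLeft_apply]
  rw [hz y]

lemma epsT_central {z : A} (hz : z ∈ centerSet A) : W.epsT z ∈ centerSet A := by
  intro x
  have h1 := W.R'_lem z x
  have h2 := W.R'''_lem z x
  rw [W.mulfun_eq hz] at h1
  rw [h1] at h2
  rw [W.thT_eq_epsT hz] at h2
  exact h2.symm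

lemma epsS_central {z : A} (hz : z ∈ centerSet A) : W.epsS z ∈ centerSet A := by
  intro x
  have h1 := W.R_lem z x
  have h2 := W.R''_lem z x
  rw [W.mulfun_eq hz] at h2
  rw [h1] at h2
  rw [W.thS_eq_epsS hz] at h2
  exact h2

lemma epsT_epsS {z : A} (hz : z ∈ centerSet A) : W.epsT (W.epsS z) = W.epsT z := by
  obtain ⟨E, hE⟩ := TensorProduct.exists_finset (W.Δ 1)
  rw [W.epsT_apply E Prod.fst Prod.snd hE (W.epsS z), ← W.thT_eq_epsT hz,
    W.thT_apply E Prod.fst Prod.snd hE z]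
  refine Finset.sum_congr rfl fun p _ => ?_
  rw [← W.epsS_central hz p.1, W.epsS_mul_eps p.1 z]

/-- For `a ∈ A_L`, `Δ a = Δ1 (a ⊗ 1)`. -/
lemma DeltaAL {a : A} (ha : a ∈ W.AL) : W.Δ a = W.dL a := by
  obtain ⟨φ, hφ⟩ := ha
  obtain ⟨E, hE⟩ := TensorProduct.exists_finset (W.Δ 1)
  set Φ : A ⊗[ℂ] (A ⊗[ℂ] A) →ₗ[ℂ] A ⊗[ℂ] A :=
    (TensorProduct.lid ℂ (A ⊗[ℂ] A)).toLinearMap ∘ₗ TensorProduct.map φ LinearMap.id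
    with hΦdef
  have hΦ_tmul : ∀ (x : A) (u : A ⊗[ℂ] A), Φ (x ⊗ₜ[ℂ] u) = φ x • u := fun x u => by
    simp only [hΦdef, comp_apply, TensorProduct.map_tmul, LinearMap.id_coe, id_eq,
      LinearEquiv.coe_coe, TensorProduct.lid_tmul]
  have ha' : a = ∑ p ∈ E, φ p.1 • p.2 := by
    rw [hφ, hE]
    simp only [map_sum, TensorProduct.map_tmul, LinearMap.id_coe, id_eq,
      LinearEquiv.coe_coe, TensorProduct.lid_tmul]
  have h1 : Φ ((TensorProduct.map (LinearMap.id : A →ₗ[ℂ] A) W.Δ) (W.Δ 1)) = W.Δ a := by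
    rw [hE, map_sum, map_sum]
    have hterm : ∀ p : A × A,
        Φ (TensorProduct.map (LinearMap.id : A →ₗ[ℂ] A) W.Δ (p.1 ⊗ₜ[ℂ] p.2))
          = φ p.1 • W.Δ p.2 := fun p => by
      rw [TensorProduct.map_tmul]
      simp only [LinearMap.id_coe, id_eq]
      exact hΦ_tmul _ _
    rw [Finset.sum_congr rfl fun p _ => hterm p]
    conv_rhs => rw [ha', map_sum]
    exact Finset.sum_congr rfl fun p _ => (map_smul W.Δ _ _).symm
  have h2 : Φ (((1:A) ⊗ₜ[ℂ] W.Δ 1) * (TensorProduct.assoc ℂ A A A) (W.Δ 1 ⊗ₜ[ℂ] (1:A)))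
      = W.dL a := by
    rw [hE]
    simp only [TensorProduct.tmul_sum, TensorProduct.sum_tmul, map_sum,
      TensorProduct.assoc_tmul, Finset.sum_mul_sum, Algebra.TensorProduct.tmul_mul_tmul,
      one_mul, mul_one]
    rw [W.dL_apply E Prod.fst Prod.snd hE a]
    refine Finset.sum_congr rfl fun p _ => ?_
    rw [Finset.sum_congr rfl fun q (_ : q ∈ E) =>
      hΦ_tmul q.1 ((p.1 * q.2) ⊗ₜ[ℂ] p.2)]
    conv_rhs => rw [ha', Finset.mul_sum, TensorProduct.sum_tmul]
    refine Finset.sum_congr rfl fun q _ => ?_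
    rw [mul_smul_comm, TensorProduct.smul_tmul']
  rw [← h1, W.coassoc1_left]
  exact h2

set_option synthInstance.maxHeartbeats 1000000 in
/-- For `a ∈ A_R`, `Δ a = Δ1 (1 ⊗ a)`. -/
lemma DeltaAR {a : A} (ha : a ∈ W.AR) : W.Δ a = W.dL2 a := by
  obtain ⟨ψ, hψ⟩ := ha
  obtain ⟨E, hE⟩ := TensorProduct.exists_finset (W.Δ 1)
  set Φ : (A ⊗[ℂ] A) ⊗[ℂ] A →ₗ[ℂ] A ⊗[ℂ] A :=
    (TensorProduct.rid ℂ (A ⊗[ℂ] A)).toLinearMap ∘ₗ TensorProduct.map LinearMap.id ψ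
    with hΦdef
  have hΦ_tmul : ∀ (u : A ⊗[ℂ] A) (c : A), Φ (u ⊗ₜ[ℂ] c) = ψ c • u := fun u c => by
    simp only [hΦdef, comp_apply, TensorProduct.map_tmul, LinearMap.id_coe, id_eq,
      LinearEquiv.coe_coe, TensorProduct.rid_tmul]
  have ha' : a = ∑ q ∈ E, ψ q.2 • q.1 := by
    rw [hψ, hE]
    simp only [map_sum, TensorProduct.map_tmul, LinearMap.id_coe, id_eq,
      LinearEquiv.coe_coe, TensorProduct.rid_tmul]
  have h1 : Φ ((TensorProduct.map W.Δ (LinearMap.id : A →ₗ[ℂ] A)) (W.Δ 1)) = W.Δ a := by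
    rw [hE, map_sum, map_sum]
    have hterm : ∀ q : A × A,
        Φ (TensorProduct.map W.Δ (LinearMap.id : A →ₗ[ℂ] A) (q.1 ⊗ₜ[ℂ] q.2))
          = ψ q.2 • W.Δ q.1 := fun q => by
      rw [TensorProduct.map_tmul]
      simp only [LinearMap.id_coe, id_eq]
      exact hΦ_tmul _ _
    rw [Finset.sum_congr rfl fun q _ => hterm q]
    conv_rhs => rw [ha', map_sum]
    exact Finset.sum_congr rfl fun q _ => (map_smul W.Δ _ _).symm
  have h2 : Φ ((W.Δ 1 ⊗ₜ[ℂ] (1:A)) * (TensorProduct.assoc ℂ A A A).symm ((1:A) ⊗ₜ[ℂ] W.Δ 1))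
      = W.dL2 a := by
    rw [hE]
    simp only [TensorProduct.tmul_sum, TensorProduct.sum_tmul, map_sum,
      TensorProduct.assoc_symm_tmul, Finset.sum_mul_sum, Algebra.TensorProduct.tmul_mul_tmul,
      one_mul, mul_one]
    rw [W.dL2_apply E Prod.fst Prod.snd hE a]
    refine Finset.sum_congr rfl fun p _ => ?_
    rw [Finset.sum_congr rfl fun q (_ : q ∈ E) =>
      hΦ_tmul (p.1 ⊗ₜ[ℂ] (p.2 * q.1)) q.2]
    conv_rhs => rw [ha', Finset.mul_sum, TensorProduct.tmul_sum]
    refine Finset.sum_congr rfl fun q _ => ?_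
    rw [mul_smul_comm, TensorProduct.tmul_smul]
  rw [← h1, ← W.unit_weak]
  exact h2

end WeakHopfAlgebra
end AuxWHA4

section AuxMod

open TensorProduct LinearMap

namespace ModuleAlgebra

variable {A : Type} [Ring A] [Algebra ℂ A] [StarRing A] [StarModule ℂ A]
variable {M : Type} [Ring M] [Algebra ℂ M] [StarRing M] [StarModule ℂ M]
variable {W : WeakHopfAlgebra A} (MA : ModuleAlgebra W M)

lemma act_mul_sum {ι : Type} (F : Finset ι) (f g : ι → A) (a : A)
    (hF : W.Δ a = ∑ i ∈ F, f i ⊗ₜ[ℂ] g i) (m n : M) :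
    MA.act a (m * n) = ∑ i ∈ F, MA.act (f i) m * MA.act (g i) n := by
  rw [MA.act_mul' a m n, hF, map_sum, map_sum]
  exact Finset.sum_congr rfl fun i _ => by
    rw [TensorProduct.map_tmul, LinearMap.mul'_apply, LinearMap.flip_apply,
      LinearMap.flip_apply]

lemma act_unit_epsT (a : A) : MA.act a 1 = MA.act (W.epsT a) 1 := by
  rw [MA.act_unit a, W.swIdS_eq_epsT a]

/-- For `a ∈ A_L`, `a ▷ m = (a ▷ 1) m`. -/
lemma actAL {a : A} (ha : a ∈ W.AL) (m : M) : MA.act a m = MA.act a 1 * m := by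
  obtain ⟨E, hE⟩ := TensorProduct.exists_finset (W.Δ 1)
  have hΔa : W.Δ a = ∑ p ∈ E, (p.1 * a) ⊗ₜ[ℂ] p.2 := by
    rw [W.DeltaAL ha, W.dL_apply E Prod.fst Prod.snd hE a]
  have h1 := MA.act_mul_sum E (fun p => p.1 * a) Prod.snd a hΔa 1 m
  rw [one_mul] at h1
  have h2 := MA.act_mul_sum E Prod.fst Prod.snd 1 hE (MA.act a 1) m
  rw [MA.act_one] at h2
  rw [h1, h2]
  exact Finset.sum_congr rfl fun p _ => by rw [MA.act_mul]

/-- For `a ∈ A_R`, `a ▷ m = m (a ▷ 1)`. -/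
lemma actAR {a : A} (ha : a ∈ W.AR) (m : M) : MA.act a m = m * MA.act a 1 := by
  obtain ⟨E, hE⟩ := TensorProduct.exists_finset (W.Δ 1)
  have hΔa : W.Δ a = ∑ p ∈ E, p.1 ⊗ₜ[ℂ] (p.2 * a) := by
    rw [W.DeltaAR ha, W.dL2_apply E Prod.fst Prod.snd hE a]
  have h1 := MA.act_mul_sum E Prod.fst (fun p => p.2 * a) a hΔa m 1
  rw [mul_one] at h1
  have h2 := MA.act_mul_sum E Prod.fst Prod.snd 1 hE m (MA.act a 1)
  rw [MA.act_one] at h2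
  rw [h1, h2]
  exact Finset.sum_congr rfl fun p _ => by rw [MA.act_mul]

lemma act_center_fixed {z : A} (hz : z ∈ centerSet A) : MA.act z 1 ∈ MA.fixed := by
  intro b m
  obtain ⟨E, hE⟩ := TensorProduct.exists_finset (W.Δ 1)
  obtain ⟨S, hS⟩ := TensorProduct.exists_finset (W.Δ b)
  have hmap : (W.epsT ∘ₗ mulLeft ℂ z) ∘ₗ W.epsT = W.epsT ∘ₗ mulLeft ℂ z := by
    ext y
    simp only [comp_apply, mulLeft_apply]
    rw [W.epsT_apply E Prod.fst Prod.snd hE (z * W.epsT y),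
      W.epsT_apply E Prod.fst Prod.snd hE (z * y)]
    refine Finset.sum_congr rfl fun p _ => ?_
    rw [← mul_assoc, W.eps_mul_epsT (p.1 * z) y, mul_assoc]
  have hcomp := TensorProduct.map_comp (LinearMap.id : A →ₗ[ℂ] A)
    (W.epsT ∘ₗ mulLeft ℂ z) LinearMap.id W.epsT
  rw [LinearMap.id_comp, hmap] at hcomp
  have hI3 : TensorProduct.map LinearMap.id (W.epsT ∘ₗ mulLeft ℂ z) (W.Δ b)
      = TensorProduct.map LinearMap.id (W.epsT ∘ₗ mulLeft ℂ z) (W.dL b) := by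
    conv_lhs => rw [hcomp]
    rw [LinearMap.comp_apply, W.I1 b]
  have hL := congrArg (fun t => LinearMap.mul' ℂ M
    ((TensorProduct.map (MA.act.flip m) (MA.act.flip (1:M))) t)) hI3
  rw [hS, W.dL_apply E Prod.fst Prod.snd hE b] at hL
  simp only [map_sum, TensorProduct.map_tmul, comp_apply, mulLeft_apply,
    LinearMap.id_coe, id_eq, LinearMap.mul'_apply, LinearMap.flip_apply] at hL
  have hb := MA.act_mul_sum S Prod.fst Prod.snd b hS m (MA.act z 1)
  rw [hb]
  have h3 : ∀ s : A × A, MA.act s.1 m * MA.act s.2 (MA.act z 1)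
      = MA.act s.1 m * MA.act (W.epsT (z * s.2)) 1 := fun s => by
    rw [← MA.act_mul, ← hz s.2, MA.act_unit_epsT (z * s.2)]
  rw [Finset.sum_congr rfl fun s _ => h3 s, hL]
  have h4 : ∀ p : A × A, MA.act (p.1 * b) m * MA.act (W.epsT (z * p.2)) 1
      = MA.act p.1 (MA.act b m) * MA.act p.2 (MA.act z 1) := fun p => by
    rw [← MA.act_unit_epsT (z * p.2), hz p.2, MA.act_mul, MA.act_mul]
  rw [Finset.sum_congr rfl fun p _ => h4 p]
  have h5 := MA.act_mul_sum E Prod.fst Prod.snd 1 hE (MA.act b m) (MA.act z 1)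
  rw [MA.act_one] at h5
  exact h5.symm

lemma act_center_comm {z : A} (hz : z ∈ centerSet A) {n : M} (hn : n ∈ MA.fixed) :
    MA.act z 1 * n = n * MA.act z 1 := by
  have hd : MA.act z 1 = MA.act (W.epsS z) 1 := by
    rw [MA.act_unit_epsT z, ← W.epsT_epsS hz, ← MA.act_unit_epsT (W.epsS z)]
  have h1 : n * MA.act z 1 = MA.act (W.epsS z) n := by
    rw [hd, ← MA.actAR (W.epsS_mem_AR z) n]
  have h2 := hn (W.epsS z) 1
  rw [one_mul] at h2
  rw [h1, h2, ← hd]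

end ModuleAlgebra
end AuxMod

/-- Corollary 2.17 of [NSW]: (i) `(A_L ∩ A_R) ▷ 1_M` is contained in the
center of `M`; (ii) `(A_L ∩ C(A)) ▷ 1_M = C(A) ▷ 1_M` and this set is
contained in the center of the fixed point algebra `M^A`;
(iii) the kernel of `μ_▷ : A_L → M`, `a ↦ a ▷ 1_M`, is `A_L ∩ K_▷`, i.e.
`a ∈ A_L` with `a ▷ 1_M = 0` annihilates all of `M`. -/
theorem mu_kernel_and_center
    {A M : Type} [Ring A] [Algebra ℂ A] [StarRing A] [StarModule ℂ A]
    [Ring M] [Algebra ℂ M] [StarRing M] [StarModule ℂ M]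
    (W : WeakHopfAlgebra A) (MA : ModuleAlgebra W M) :
    (∀ a ∈ W.AL ∩ W.AR, MA.act a 1 ∈ centerSet M)
    ∧ ((fun a : A => MA.act a 1) '' (W.AL ∩ centerSet A)
        = (fun a : A => MA.act a 1) '' (centerSet A))
    ∧ (∀ a ∈ centerSet A,
        MA.act a 1 ∈ MA.fixed ∧ ∀ n ∈ MA.fixed, MA.act a 1 * n = n * MA.act a 1)
    ∧ (∀ a ∈ W.AL, MA.act a 1 = 0 → ∀ m : M, MA.act a m = 0) := by
  refine ⟨?_, ?_, ?_, ?_⟩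
  · rintro a ⟨haL, haR⟩ r
    rw [← MA.actAL haL r]
    exact MA.actAR haR r
  · ext m
    constructor
    · rintro ⟨a, ⟨-, haC⟩, rfl⟩
      exact ⟨a, haC, rfl⟩
    · rintro ⟨z, hzC, rfl⟩
      exact ⟨W.epsT z, ⟨W.epsT_mem_AL z, W.epsT_central hzC⟩, (MA.act_unit_epsT z).symm⟩
  · intro z hz
    exact ⟨MA.act_center_fixed hz, fun n hn => MA.act_center_comm hz hn⟩
  · intro a ha h0 m
    rw [MA.actAL ha m, h0, zero_mul]
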